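/- In the Black-Scholes setting, for fixed S, K, T > 0 and r, q ∈ ℝ, the function σ ↦ C(S,K,T,r,q,σ) is differentiable on (0, ∞) with ∂C/∂σ = S·exp(−q·T)·√T·φ(d1) (the option Vega); in particular Vega is strictly positive, so the call price is a strictly increasing function of the volatility σ. -/

import Mathlib

open Real

/-- Standard normal density. -/
noncomputable def stdNormalPdf (x : ℝ) : ℝ := Real.exp (-x ^ 2 / 2) / Real.sqrt (2 * Real.pi)

/-- Standard normal cumulative distribution function. -/
noncomputable def stdNormalCdf (x : ℝ) : ℝ := ∫ t in Set.Iic x, stdNormalPdf t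

/-- Black-Scholes `d₁`. -/
noncomputable def bsD1 (S K T r q σ : ℝ) : ℝ :=
  (Real.log (S / K) + (r - q + σ ^ 2 / 2) * T) / (σ * Real.sqrt T)

/-- Black-Scholes `d₂`. -/
noncomputable def bsD2 (S K T r q σ : ℝ) : ℝ := bsD1 S K T r q σ - σ * Real.sqrt T

/-- Black-Scholes call option price. -/
noncomputable def bsCall (S K T r q σ : ℝ) : ℝ :=
  S * Real.exp (-q * T) * stdNormalCdf (bsD1 S K T r q σ) -
    K * Real.exp (-r * T) * stdNormalCdf (bsD2 S K T r q σ)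

lemma pdf_integrable : MeasureTheory.Integrable stdNormalPdf := by
  have h : stdNormalPdf = fun x => (Real.sqrt (2*Real.pi))⁻¹ * Real.exp (-(2⁻¹) * x ^ 2) := by
    funext x; unfold stdNormalPdf; rw [div_eq_inv_mul]; ring_nf
  rw [h]
  exact (integrable_exp_neg_mul_sq (by norm_num)).const_mul _

lemma pdf_cont : Continuous stdNormalPdf := by
  unfold stdNormalPdf; fun_prop

lemma cdf_hasDerivAt (x : ℝ) : HasDerivAt stdNormalCdf (stdNormalPdf x) x := by
  have key : ∀ y : ℝ, stdNormalCdf y = stdNormalCdf 0 + ∫ t in (0:ℝ)..y, stdNormalPdf t := by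
    intro y
    have := intervalIntegral.integral_Iic_sub_Iic (f := stdNormalPdf) (μ := MeasureTheory.volume)
      pdf_integrable.integrableOn pdf_integrable.integrableOn (a := 0) (b := y)
    unfold stdNormalCdf; rw [← this]; ring
  have h1 : HasDerivAt (fun y => ∫ t in (0:ℝ)..y, stdNormalPdf t) (stdNormalPdf x) x :=
    intervalIntegral.integral_hasDerivAt_right (pdf_cont.intervalIntegrable 0 x)
      (pdf_cont.stronglyMeasurableAtFilter _ _) pdf_cont.continuousAt
  have h2 := h1.const_add (stdNormalCdf 0)
  have : (fun y => stdNormalCdf 0 + ∫ t in (0:ℝ)..y, stdNormalPdf t) = stdNormalCdf := by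
    funext y; rw [← key]
  rwa [this] at h2


/-- The Black-Scholes call price is differentiable in the volatility with
`∂C/∂σ = S·exp(-qT)·√T·φ(d₁)` (the Vega), which is strictly positive: the call
price is strictly increasing in the volatility. -/
theorem bsCall_vega (S K T r q : ℝ) (hS : 0 < S) (hK : 0 < K) (hT : 0 < T) :
    ∀ σ : ℝ, 0 < σ →
      HasDerivAt (fun s => bsCall S K T r q s)
        (S * Real.exp (-q * T) * Real.sqrt T * stdNormalPdf (bsD1 S K T r q σ)) σ ∧
      0 < S * Real.exp (-q * T) * Real.sqrt T * stdNormalPdf (bsD1 S K T r q σ) := by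
  intro σ hσ
  set st := Real.sqrt T with hst_def
  have hst : 0 < st := Real.sqrt_pos.mpr hT
  have hst2 : st ^ 2 = T := Real.sq_sqrt hT.le
  set l := Real.log (S / K) with hl_def
  set B := (l + (r - q) * T) / st with hB_def
  -- derivative of d1
  have hD1fun : ∀ s : ℝ, 0 < s → bsD1 S K T r q s = B * s⁻¹ + s * (st / 2) := by
    intro s hs
    unfold bsD1
    rw [hB_def, ← hl_def, ← hst_def]
    field_simp
    linear_combination (-(s ^ 2)) * hst2
  set d1' := B * (-(σ ^ 2)⁻¹) + st / 2 with hd1'_def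
  have hD1 : HasDerivAt (fun s => bsD1 S K T r q s) d1' σ := by
    have hg : HasDerivAt (fun s : ℝ => B * s⁻¹ + s * (st / 2)) d1' σ := by
      have := ((hasDerivAt_inv hσ.ne').const_mul B).add ((hasDerivAt_id σ).mul_const (st / 2))
      exact this.congr_deriv (by rw [hd1'_def]; ring)
    apply hg.congr_of_eventuallyEq
    filter_upwards [Ioi_mem_nhds hσ] with s hs
    exact hD1fun s hs
  have hD2 : HasDerivAt (fun s => bsD2 S K T r q s) (d1' - st) σ := by
    have := hD1.sub ((hasDerivAt_id σ).mul_const st)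
    have he : (fun s => bsD1 S K T r q s - s * st) = fun s => bsD2 S K T r q s := by
      funext s; unfold bsD2; rw [← hst_def]
    rw [← he]
    exact this.congr_deriv (by ring)
  -- key identity
  have hmul : bsD1 S K T r q σ * (σ * st) = l + (r - q) * T + σ ^ 2 * T / 2 := by
    unfold bsD1
    rw [← hl_def, ← hst_def]
    field_simp
    ring
  have hd2 : bsD2 S K T r q σ = bsD1 S K T r q σ - σ * st := rfl
  have hsq : -(bsD2 S K T r q σ) ^ 2 / 2 = -(bsD1 S K T r q σ) ^ 2 / 2 + (l + (r - q) * T) := by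
    rw [hd2]
    linear_combination hmul - σ ^ 2 / 2 * hst2
  have hkey : K * Real.exp (-r * T) * stdNormalPdf (bsD2 S K T r q σ) =
      S * Real.exp (-q * T) * stdNormalPdf (bsD1 S K T r q σ) := by
    unfold stdNormalPdf
    rw [hsq, Real.exp_add, Real.exp_add, hl_def, Real.exp_log (div_pos hS hK)]
    have hE : Real.exp (-(r * T)) * Real.exp ((r - q) * T) = Real.exp (-(q * T)) := by
      rw [← Real.exp_add]; ring_nf
    have h2pi : Real.sqrt (2 * Real.pi) ≠ 0 := by positivity
    field_simp
    have hE' : Real.exp (-(r * T)) * Real.exp (T * (r - q)) = Real.exp (-(T * q)) := by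
      rw [← Real.exp_add]; ring_nf
    linear_combination hE'
  -- combine
  have hC1 := (cdf_hasDerivAt (bsD1 S K T r q σ)).comp σ hD1
  have hC2 := (cdf_hasDerivAt (bsD2 S K T r q σ)).comp σ hD2
  have hderiv := ((hC1.const_mul (S * Real.exp (-q * T))).sub
    (hC2.const_mul (K * Real.exp (-r * T))))
  have hEq : S * Real.exp (-q * T) * (stdNormalPdf (bsD1 S K T r q σ) * d1') -
      K * Real.exp (-r * T) * (stdNormalPdf (bsD2 S K T r q σ) * (d1' - st)) =
      S * Real.exp (-q * T) * st * stdNormalPdf (bsD1 S K T r q σ) := by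
    linear_combination (st - d1') * hkey
  constructor
  · have : (fun s => S * Real.exp (-q * T) * stdNormalCdf (bsD1 S K T r q s) -
        K * Real.exp (-r * T) * stdNormalCdf (bsD2 S K T r q s)) = fun s => bsCall S K T r q s := by
      funext s; rfl
    rw [← hEq]
    exact hderiv
  · have hpdf : 0 < stdNormalPdf (bsD1 S K T r q σ) := by
      unfold stdNormalPdf
      have : 0 < Real.pi := Real.pi_pos
      positivity
    exact mul_pos (mul_pos (mul_pos hS (Real.exp_pos _)) hst) hpdf
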